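/- arXiv:1308.4743 — 6 statements merged into one kernel-verified Lean document; each statement's English description precedes it below -/
import Mathlib

section
/- Let O_v be a valuation domain and R an O_v-algebra. Then R satisfies lying over (LO) over O_v — that is, for every prime ideal P of O_v there is a prime ideal Q of R with Q ∩ O_v = P — if and only if R is a faithful O_v-module and for every prime P of O_v, the localized algebra R_P satisfies ((R_P)^× ∩ (O_v)_P) ⊆ ((O_v)_P)^×. -/
open scoped TensorProduct

/-- A (left) ideal of a possibly noncommutative ring is two-sided. -/
def IsTwoSidedI {R : Type*} [Ring R] (Q : Ideal R) : Prop :=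
  ∀ a ∈ Q, ∀ r : R, a * r ∈ Q

/-- Primeness for two-sided ideals of a possibly noncommutative ring. -/
def IsPrimeNC {R : Type*} [Ring R] (Q : Ideal R) : Prop :=
  Q ≠ ⊤ ∧ ∀ x y : R, (∀ r : R, x * r * y ∈ Q) → x ∈ Q ∨ y ∈ Q

section Aux

variable {O R : Type*} [CommRing O] [Ring R] [Algebra O R] (P : Ideal O) [P.IsPrime]

local notation "L" => Localization.AtPrime P

/-- common denominator lemma -/
lemma stmt3_denom (z : L ⊗[O] R) :
    ∃ s ∈ P.primeCompl, ∃ r : R,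
      algebraMap O (L ⊗[O] R) s * z = (1 : L) ⊗ₜ[O] r := by
  have key : ∀ (s : O) (r : R),
      algebraMap O (L ⊗[O] R) s * ((1 : L) ⊗ₜ[O] r) = (1 : L) ⊗ₜ[O] (s • r) := by
    intro s r
    rw [← Algebra.smul_def, TensorProduct.tmul_smul]
  induction z using TensorProduct.induction_on with
  | zero => exact ⟨1, P.primeCompl.one_mem, 0, by simp⟩
  | tmul l r =>
      obtain ⟨⟨a, s⟩, h⟩ := IsLocalization.surj P.primeCompl l
      have h' : l * algebraMap O L (s : O) = algebraMap O L a := h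
      refine ⟨s, s.2, a • r, ?_⟩
      rw [IsScalarTower.algebraMap_apply O L (L ⊗[O] R),
        Algebra.TensorProduct.algebraMap_apply, Algebra.TensorProduct.tmul_mul_tmul, one_mul]
      simp only [Algebra.algebraMap_self, RingHom.id_apply]
      rw [mul_comm, h']
      rw [Algebra.algebraMap_eq_smul_one (A := L), TensorProduct.smul_tmul]
  | add x y hx hy =>
      obtain ⟨s1, hs1, r1, h1⟩ := hx
      obtain ⟨s2, hs2, r2, h2⟩ := hy
      refine ⟨s1 * s2, P.primeCompl.mul_mem hs1 hs2, s2 • r1 + s1 • r2, ?_⟩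
      have e1 : algebraMap O (L ⊗[O] R) (s1 * s2) * x
          = (1 : L) ⊗ₜ[O] (s2 • r1) := by
        rw [mul_comm s1 s2, map_mul, mul_assoc, h1, key]
      have e2 : algebraMap O (L ⊗[O] R) (s1 * s2) * y
          = (1 : L) ⊗ₜ[O] (s1 • r2) := by
        rw [map_mul, mul_assoc, h2, key]
      rw [mul_add, e1, e2, TensorProduct.tmul_add]

/-- kernel of `R → L ⊗ R` -/
lemma stmt3_ker (r : R) (h : (1 : L) ⊗ₜ[O] r = 0) :
    ∃ t ∈ P.primeCompl, t • r = 0 := by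
  have inst : IsLocalizedModule P.primeCompl (TensorProduct.mk O L R 1) :=
    (isLocalizedModule_iff_isBaseChange P.primeCompl L _).mpr (TensorProduct.isBaseChange _ _ _)
  have := (IsLocalizedModule.eq_zero_iff P.primeCompl (TensorProduct.mk O L R 1)).mp h
  obtain ⟨s, hs⟩ := this
  exact ⟨s.1, s.2, hs⟩

end Aux

set_option maxHeartbeats 1000000 in
set_option synthInstance.maxHeartbeats 400000 in
/-- Let `O` be a valuation domain and `R` an `O`-algebra.  Then `R`
satisfies lying over (LO) over `O` — for every prime `P` of `O` there is a prime
(two-sided) ideal `Q` of `R` with `Q ∩ O = P` — if and only if `R` is faithful over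
`O` and for every prime `P` of `O` every element of `O_P` becoming invertible in
`R_P = O_P ⊗[O] R` is already invertible in `O_P`. -/
theorem stmt3 {O R : Type*} [CommRing O] [IsDomain O] [ValuationRing O]
    [Ring R] [Algebra O R] :
    (∀ P : Ideal O, P.IsPrime →
        ∃ Q : Ideal R, IsTwoSidedI Q ∧ IsPrimeNC Q ∧ Q.comap (algebraMap O R) = P) ↔
      ((∀ a : O, algebraMap O R a = 0 → a = 0) ∧
        ∀ (P : Ideal O) (_ : P.IsPrime) (u : Localization.AtPrime P),
          IsUnit (algebraMap (Localization.AtPrime P)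
              (Localization.AtPrime P ⊗[O] R) u) → IsUnit u) := by
  constructor
  · intro lo
    constructor
    · -- faithfulness, from LO at the zero ideal
      intro a ha
      obtain ⟨Q, -, -, hQc⟩ := lo ⊥ Ideal.bot_prime
      have : a ∈ Q.comap (algebraMap O R) := by
        simp only [Ideal.mem_comap, ha]; exact Q.zero_mem
      rw [hQc] at this
      exact Ideal.mem_bot.mp this
    · intro P hP
      haveI := hP
      set L := Localization.AtPrime P with hL
      set Rp := L ⊗[O] R with hRp
      intro u hu
      obtain ⟨Q, hQ2, hQpr, hQc⟩ := lo P hP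
      set f : R →ₐ[O] Rp := Algebra.TensorProduct.includeRight with hf
      set φ : L →+* Rp := algebraMap L Rp with hφ
      have hfalg : ∀ a : O, f (algebraMap O R a) = φ (algebraMap O L a) := by
        intro a
        rw [AlgHom.commutes, IsScalarTower.algebraMap_apply O L Rp]
      by_contra hnu
      have hum : u ∈ IsLocalRing.maximalIdeal L :=
        (IsLocalRing.mem_maximalIdeal u).mpr (mem_nonunits_iff.mpr hnu)
      obtain ⟨⟨a, s⟩, hsu⟩ := IsLocalization.surj P.primeCompl u
      have hsu' : u * algebraMap O L (s : O) = algebraMap O L a := hsu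
      have haP : a ∈ P := by
        have : algebraMap O L a ∈ IsLocalRing.maximalIdeal L := by
          rw [← hsu']; exact Ideal.mul_mem_right _ _ hum
        exact (IsLocalization.AtPrime.to_map_mem_maximal_iff L P a).mp this
      have haQ : algebraMap O R a ∈ Q := by
        rw [← hQc] at haP; exact haP
      -- the left ideal generated by the image of Q
      set J : Ideal Rp := Ideal.span (⇑f '' (Q : Set R)) with hJ
      -- J is proper
      have hJT : ∀ z ∈ J, ∃ s ∈ P.primeCompl, ∃ q ∈ Q,
          algebraMap O Rp s * z = f q := by
        intro z hz
        let T : Submodule Rp Rp :=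
          { carrier := {z | ∃ s ∈ P.primeCompl, ∃ q ∈ Q, algebraMap O Rp s * z = f q}
            zero_mem' := ⟨1, P.primeCompl.one_mem, 0, Q.zero_mem, by simp⟩
            add_mem' := by
              rintro z1 z2 ⟨s1, hs1, q1, hq1, h1⟩ ⟨s2, hs2, q2, hq2, h2⟩
              refine ⟨s1 * s2, P.primeCompl.mul_mem hs1 hs2,
                algebraMap O R s2 * q1 + algebraMap O R s1 * q2,
                Q.add_mem (Q.mul_mem_left _ hq1) (Q.mul_mem_left _ hq2), ?_⟩
              have e1 : algebraMap O Rp (s1 * s2) * z1 = f (algebraMap O R s2 * q1) := by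
                rw [mul_comm s1 s2, map_mul, mul_assoc, h1, map_mul, hfalg,
                  ← IsScalarTower.algebraMap_apply O L Rp]
              have e2 : algebraMap O Rp (s1 * s2) * z2 = f (algebraMap O R s1 * q2) := by
                rw [map_mul, mul_assoc, h2, map_mul, hfalg,
                  ← IsScalarTower.algebraMap_apply O L Rp]
              rw [mul_add, e1, e2, ← map_add]
            smul_mem' := by
              rintro c z ⟨s, hs, q, hq, hzq⟩
              obtain ⟨s', hs', r', hc⟩ := stmt3_denom P c
              refine ⟨s' * s, P.primeCompl.mul_mem hs' hs, r' * q, Q.mul_mem_left _ hq, ?_⟩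
              have hc' : algebraMap O Rp s' * c = f r' := hc
              have hcent : ∀ (b : O) (w : Rp),
                  algebraMap O Rp b * w = w * algebraMap O Rp b := by
                intro b w
                rw [IsScalarTower.algebraMap_apply O L Rp]
                exact Algebra.commutes _ _
              have key : algebraMap O Rp (s' * s) * (c * z)
                  = (algebraMap O Rp s' * c) * (algebraMap O Rp s * z) := by
                rw [map_mul, mul_assoc, ← mul_assoc (algebraMap O Rp s) c z, hcent s c,
                  mul_assoc c, ← mul_assoc (algebraMap O Rp s') c]
              rw [smul_eq_mul, key, hc', hzq, ← map_mul] }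
        have : J ≤ T := by
          rw [hJ, Ideal.span_le]
          rintro - ⟨q, hq, rfl⟩
          exact ⟨1, P.primeCompl.one_mem, q, hq, by simp⟩
        exact this hz
      have hJne : (1 : Rp) ∉ J := by
        intro h1
        obtain ⟨s, hs, q, hq, he⟩ := hJT 1 h1
        rw [mul_one] at he
        have : f (algebraMap O R s - q) = 0 := by
          rw [map_sub, hfalg, ← IsScalarTower.algebraMap_apply O L Rp, he, sub_self]
        have h0 : (1 : L) ⊗ₜ[O] (algebraMap O R s - q) = 0 := this
        obtain ⟨t, ht, htc⟩ := stmt3_ker P _ h0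
        rw [smul_sub] at htc
        have h2 : algebraMap O R (t * s) = t • q := by
          rw [map_mul, ← Algebra.smul_def]
          exact sub_eq_zero.mp htc
        have hts : t * s ∈ Q.comap (algebraMap O R) := by
          rw [Ideal.mem_comap, h2, Algebra.smul_def]
          exact Q.mul_mem_left _ hq
        rw [hQc] at hts
        exact (P.primeCompl.mul_mem ht hs) hts
      -- φ u ∈ J
      have hsunit : IsUnit (algebraMap O Rp s) := by
        rw [IsScalarTower.algebraMap_apply O L Rp]
        exact (IsLocalization.map_units L s).map φ
      have hφuJ : φ u ∈ J := by
        have he : φ u * algebraMap O Rp s.1 = f (algebraMap O R a) := by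
          rw [hfalg, ← IsScalarTower.algebraMap_apply O L Rp,
            IsScalarTower.algebraMap_apply O L Rp, ← map_mul, hsu,
            ← IsScalarTower.algebraMap_apply O L Rp]
        have hcentral : ∀ z : Rp, f (algebraMap O R a) * z = z * f (algebraMap O R a) := by
          intro z
          rw [hfalg]
          exact Algebra.commutes _ z
        have : φ u = ↑hsunit.unit⁻¹ * f (algebraMap O R a) := by
          rw [← hcentral, ← he, Units.eq_mul_inv_iff_mul_eq]
          rfl
        rw [this]
        exact Ideal.mul_mem_left _ _ (Ideal.subset_span ⟨_, haQ, rfl⟩)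
      have : (1 : Rp) ∈ J := by
        have := Ideal.mul_mem_left J (↑hu.unit⁻¹) hφuJ
        rwa [IsUnit.val_inv_mul] at this
      exact hJne this
  · rintro ⟨hfaith, hloc⟩ P hP
    haveI := hP
    set L := Localization.AtPrime P with hL
    set Rp := L ⊗[O] R with hRp
    set f : R →ₐ[O] Rp := Algebra.TensorProduct.includeRight with hf
    set φ : L →+* Rp := algebraMap L Rp with hφ
    have hfalg : ∀ a : O, f (algebraMap O R a) = φ (algebraMap O L a) := by
      intro a
      rw [AlgHom.commutes, IsScalarTower.algebraMap_apply O L Rp]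
    set m : Ideal L := IsLocalRing.maximalIdeal L with hm
    set N : Ideal Rp := Ideal.span (⇑φ '' (m : Set L)) with hN
    -- N is proper
    have hNT : ∀ z ∈ N, ∃ a ∈ P, ∃ w : Rp, z = w * algebraMap O Rp a := by
      intro z hz
      let T : Submodule Rp Rp :=
        { carrier := {z | ∃ a ∈ P, ∃ w : Rp, z = w * algebraMap O Rp a}
          zero_mem' := ⟨0, P.zero_mem, 0, by simp⟩
          add_mem' := by
            rintro z1 z2 ⟨a1, ha1, w1, rfl⟩ ⟨a2, ha2, w2, rfl⟩
            obtain ⟨c, hc | hc⟩ := ValuationRing.cond a1 a2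
            · refine ⟨a1, ha1, w1 + w2 * algebraMap O Rp c, ?_⟩
              rw [add_mul, ← hc, map_mul, mul_assoc, ← map_mul, ← map_mul, mul_comm a1 c]
            · refine ⟨a2, ha2, w1 * algebraMap O Rp c + w2, ?_⟩
              rw [add_mul, ← hc, map_mul, mul_assoc, ← map_mul, ← map_mul, mul_comm a2 c]
          smul_mem' := by
            rintro c z ⟨a, ha, w, rfl⟩
            exact ⟨a, ha, c * w, by rw [smul_eq_mul, mul_assoc]⟩ }
      have : N ≤ T := by
        rw [hN, Ideal.span_le]
        rintro - ⟨d, hd, rfl⟩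
        obtain ⟨⟨a, s⟩, hds⟩ := IsLocalization.surj P.primeCompl d
        have hds' : d * algebraMap O L (s : O) = algebraMap O L a := hds
        have haP : a ∈ P := by
          have : algebraMap O L a ∈ m := by
            rw [← hds']; exact Ideal.mul_mem_right _ _ hd
          exact (IsLocalization.AtPrime.to_map_mem_maximal_iff L P a).mp this
        have hsunit : IsUnit (algebraMap O Rp s) := by
          rw [IsScalarTower.algebraMap_apply O L Rp]
          exact (IsLocalization.map_units L s).map φ
        refine ⟨a, haP, ↑hsunit.unit⁻¹, ?_⟩
        rw [Units.eq_inv_mul_iff_mul_eq, IsUnit.unit_spec]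
        have : algebraMap O Rp s * φ d = φ d * algebraMap O Rp s := by
          rw [IsScalarTower.algebraMap_apply O L Rp]
          exact (Algebra.commutes _ _)
        rw [this]
        show φ d * algebraMap O Rp s.1 = algebraMap O Rp a
        rw [IsScalarTower.algebraMap_apply O L Rp, ← map_mul, hds',
          ← IsScalarTower.algebraMap_apply O L Rp]
      exact this hz
    have hNne : N ≠ ⊤ := by
      intro htop
      obtain ⟨a, haP, w, hw⟩ := hNT 1 (htop ▸ Submodule.mem_top)
      have hcent : algebraMap O Rp a * w = w * algebraMap O Rp a := by
        rw [IsScalarTower.algebraMap_apply O L Rp]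
        exact Algebra.commutes _ _
      have hunit : IsUnit (algebraMap O Rp a) :=
        isUnit_iff_exists.mpr ⟨w, by rw [hcent, ← hw], by rw [← hw]⟩
      rw [IsScalarTower.algebraMap_apply O L Rp] at hunit
      have := hloc P hP (algebraMap O L a) hunit
      exact ((IsLocalization.AtPrime.to_map_mem_maximal_iff L P a).mpr haP) this
    -- a maximal left ideal above N
    obtain ⟨M, hMmax, hNM⟩ := Ideal.exists_le_maximal N hNne
    -- its core: the largest two-sided ideal inside M
    set K : Ideal Rp :=
      { carrier := {x | ∀ r : Rp, x * r ∈ M}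
        zero_mem' := fun r => by rw [zero_mul]; exact M.zero_mem
        add_mem' := fun {x y} hx hy r => by rw [add_mul]; exact M.add_mem (hx r) (hy r)
        smul_mem' := fun c x hx r => by
          rw [smul_eq_mul, mul_assoc]; exact M.mul_mem_left _ (hx r) } with hK
    have hKmem : ∀ x : Rp, x ∈ K ↔ ∀ r : Rp, x * r ∈ M := fun x => Iff.rfl
    have hKM : K ≤ M := fun x hx => by
      have := (hKmem x).mp hx 1; rwa [mul_one] at this
    have hK2 : ∀ a ∈ K, ∀ r : Rp, a * r ∈ K := by
      intro a ha r
      rw [hKmem]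
      intro r'
      rw [mul_assoc]
      exact (hKmem a).mp ha _
    have hKne : (1 : Rp) ∉ K := by
      intro h
      exact hMmax.ne_top (Ideal.eq_top_of_unit_mem M 1 1 (hKM h) (one_mul 1))
    -- N is two-sided (generated by central elements), so N ≤ K
    have hN2 : ∀ n ∈ N, ∀ r : Rp, n * r ∈ N := by
      intro n hn
      refine Submodule.span_induction ?_ ?_ ?_ ?_ hn
      · rintro - ⟨d, hd, rfl⟩ r
        rw [Algebra.commutes (A := Rp) d r]
        exact Ideal.mul_mem_left _ _ (Ideal.subset_span ⟨d, hd, rfl⟩)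
      · intro r; rw [zero_mul]; exact N.zero_mem
      · intro x y _ _ hx hy r; rw [add_mul]; exact N.add_mem (hx r) (hy r)
      · intro c x _ hx r; rw [smul_eq_mul, mul_assoc]
        exact Ideal.mul_mem_left _ _ (hx r)
    have hNK : N ≤ K := by
      intro n hn
      rw [hKmem]
      intro r
      exact hNM (hN2 n hn r)
    -- K is prime
    have hKprime : IsPrimeNC K := by
      constructor
      · intro htop
        exact hKne (htop ▸ Submodule.mem_top)
      · intro x y hxy
        by_cases hyK : y ∈ K
        · exact Or.inr hyK
        · left
          rw [hKmem]
          obtain ⟨t, hyt⟩ : ∃ t : Rp, y * t ∉ M := by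
            by_contra h
            push_neg at h
            exact hyK ((hKmem y).mpr h)
          have hlt : M < M ⊔ Ideal.span {y * t} := by
            refine lt_of_le_of_ne le_sup_left (fun he => hyt ?_)
            have hytmem : y * t ∈ M ⊔ Ideal.span {y * t} :=
              Submodule.mem_sup_right (Ideal.subset_span (Set.mem_singleton _))
            rwa [← he] at hytmem
          have hsup : M ⊔ Ideal.span {y * t} = ⊤ := hMmax.out.2 _ hlt
          intro s
          have h1 : (1 : Rp) ∈ M ⊔ Ideal.span {y * t} := hsup ▸ Submodule.mem_top
          obtain ⟨m0, hm0, w, hw, hmw⟩ := Submodule.mem_sup.mp h1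
          obtain ⟨z, hz⟩ := Ideal.mem_span_singleton'.mp hw
          have hdecomp : x * s = x * s * m0 + x * s * (z * (y * t)) := by
            rw [← mul_add, hz, hmw, mul_one]
          rw [hdecomp]
          refine M.add_mem (M.mul_mem_left _ hm0) ?_
          have he : x * s * (z * (y * t)) = (x * (s * z) * y) * t := by
            simp only [mul_assoc]
          rw [he]
          exact hKM (hK2 _ (hxy (s * z)) t)
    -- the preimage of K in L is the maximal ideal
    have hφK : ∀ l : L, φ l ∈ K ↔ l ∈ m := by
      have hle : m ≤ Ideal.comap φ K := by
        intro d hd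
        rw [Ideal.mem_comap]
        exact hNK (Ideal.subset_span ⟨d, hd, rfl⟩)
      have hne : Ideal.comap φ K ≠ ⊤ := by
        intro htop
        have : (1 : L) ∈ Ideal.comap φ K := htop ▸ Submodule.mem_top
        rw [Ideal.mem_comap, map_one] at this
        exact hKne this
      have heq : Ideal.comap φ K = m :=
        ((IsLocalRing.maximalIdeal.isMaximal L).eq_of_le hne hle).symm
      intro l
      rw [← heq, Ideal.mem_comap]
    -- the lying-over prime of R
    refine ⟨Ideal.comap f.toRingHom K, ?_, ?_, ?_⟩
    · intro a ha r
      rw [Ideal.mem_comap] at ha ⊢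
      rw [map_mul]
      exact hK2 _ ha _
    · constructor
      · intro htop
        have : (1 : R) ∈ Ideal.comap f.toRingHom K := htop ▸ Submodule.mem_top
        rw [Ideal.mem_comap, map_one] at this
        exact hKne this
      · intro x y hxy
        have hall : ∀ z : Rp, f x * z * f y ∈ K := by
          intro z
          induction z using TensorProduct.induction_on with
          | zero => rw [mul_zero, zero_mul]; exact K.zero_mem
          | tmul l r =>
              have hlr : (l ⊗ₜ[O] r : Rp) = φ l * f r := by
                have hfr : f r = (1 : L) ⊗ₜ[O] r := rfl
                rw [hfr, hφ, Algebra.TensorProduct.algebraMap_apply,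
                  Algebra.TensorProduct.tmul_mul_tmul, one_mul, mul_one]
                simp only [Algebra.algebraMap_self, RingHom.id_apply]
              have hcomm : f x * φ l = φ l * f x := (Algebra.commutes l (f x)).symm
              have : f x * (l ⊗ₜ[O] r) * f y = φ l * f (x * r * y) := by
                rw [hlr, map_mul, map_mul, ← mul_assoc, hcomm]
                simp only [mul_assoc]
              rw [this]
              exact Ideal.mul_mem_left _ _ (hxy r)
          | add z1 z2 h1 h2 =>
              rw [mul_add, add_mul]
              exact K.add_mem h1 h2
        rcases hKprime.2 (f x) (f y) hall with h | h
        · exact Or.inl (Ideal.mem_comap.mpr h)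
        · exact Or.inr (Ideal.mem_comap.mpr h)
    · ext a
      rw [Ideal.mem_comap, Ideal.mem_comap]
      show f (algebraMap O R a) ∈ K ↔ a ∈ P
      rw [hfalg, hφK]
      exact IsLocalization.AtPrime.to_map_mem_maximal_iff L P a
end

section
/- Let O_v be a valuation domain with fraction field F and maximal ideal I_v, and let R be a torsion-free O_v-algebra with n = [R ⊗_{O_v} F : F] finite. Then the number of prime ideals of R lying over I_v is at most n. -/
open scoped TensorProduct

/-- Given a two-sided prime `Q` and finitely many two-sided ideals none of which is
contained in `Q`, there is an element of all of them avoiding `Q`. -/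
lemma aux_exists_avoid {R : Type*} [Ring R] (Q : Ideal R) (hQ : IsPrimeNC Q)
    (G : Finset (Ideal R)) :
    (∀ J ∈ G, IsTwoSidedI J ∧ ¬ J ≤ Q) → ∃ x, x ∉ Q ∧ ∀ J ∈ G, x ∈ J := by
  classical
  induction G using Finset.induction_on with
  | empty =>
      intro _
      refine ⟨1, fun h1 => hQ.1 ((Ideal.eq_top_iff_one Q).mpr h1), by simp⟩
  | @insert J G hJG ih =>
      intro hG
      obtain ⟨x, hxQ, hxG⟩ := ih fun J' hJ' => hG J' (Finset.mem_insert_of_mem hJ')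
      have hJ := hG J (Finset.mem_insert_self J G)
      obtain ⟨q, hqJ, hqQ⟩ := SetLike.not_le_iff_exists.mp hJ.2
      have hnot : ¬ ∀ r : R, x * r * q ∈ Q := by
        intro h
        rcases hQ.2 x q h with h' | h'
        exacts [hxQ h', hqQ h']
      push_neg at hnot
      obtain ⟨r, hr⟩ := hnot
      refine ⟨x * r * q, hr, ?_⟩
      intro J' hJ'
      rcases Finset.mem_insert.mp hJ' with rfl | hJ'
      · exact Ideal.mul_mem_left _ _ hqJ
      · have h1 := (hG J' (Finset.mem_insert_of_mem hJ')).1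
        exact h1 _ (h1 x (hxG J' hJ') r) q

/-- In a valuation ring, any finite nonempty family has a member dividing all others. -/
lemma aux_dvd_min {α O : Type*} [CommRing O] [IsDomain O] [ValuationRing O]
    (s : Finset α) (n : α → O) :
    s.Nonempty → ∃ j ∈ s, ∀ i ∈ s, n j ∣ n i := by
  classical
  induction s using Finset.induction_on with
  | empty => rintro ⟨a, ha⟩; exact absurd ha (by simp)
  | @insert a s ha ih =>
      intro _
      rcases s.eq_empty_or_nonempty with rfl | hs'
      · refine ⟨a, Finset.mem_insert_self _ _, ?_⟩
        intro i hi
        rcases Finset.mem_insert.mp hi with rfl | hi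
        · exact dvd_refl _
        · exact absurd hi (by simp)
      · obtain ⟨j, hj, hjd⟩ := ih hs'
        rcases ValuationRing.dvd_total (n a) (n j) with h | h
        · refine ⟨a, Finset.mem_insert_self _ _, ?_⟩
          intro i hi
          rcases Finset.mem_insert.mp hi with rfl | hi
          · exact dvd_refl _
          · exact h.trans (hjd i hi)
        · refine ⟨j, Finset.mem_insert_of_mem hj, ?_⟩
          intro i hi
          rcases Finset.mem_insert.mp hi with rfl | hi
          · exact h
          · exact hjd i hi

theorem aux_card {O F R : Type*} [CommRing O] [IsDomain O] [ValuationRing O]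
    [Field F] [Algebra O F] [IsFractionRing O F]
    [Ring R] [Algebra O R] [NoZeroSMulDivisors O R]
    [Module.Finite F (F ⊗[O] R)]
    (T : Finset (Ideal R))
    (hT : ∀ Q ∈ T, IsTwoSidedI Q ∧ IsPrimeNC Q ∧
      Q.comap (algebraMap O R) = IsLocalRing.maximalIdeal O) :
    T.card ≤ Module.finrank F (F ⊗[O] R) := by
  classical
  -- choose the elements e i
  have he : ∀ i : ↥T, ∃ x, x ∉ (i : Ideal R) ∧
      ∀ j : ↥T, j ≠ i → ¬ ((j : Ideal R) ≤ (i : Ideal R)) → x ∈ (j : Ideal R) := by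
    intro i
    obtain ⟨x, hx, hxG⟩ := aux_exists_avoid (i : Ideal R) (hT _ i.2).2.1
      ((T.erase (i : Ideal R)).filter (fun J => ¬ J ≤ (i : Ideal R)))
      (by
        intro J hJ
        rw [Finset.mem_filter, Finset.mem_erase] at hJ
        exact ⟨(hT J hJ.1.2).1, hJ.2⟩)
    refine ⟨x, hx, ?_⟩
    intro j hne hle
    refine hxG _ ?_
    rw [Finset.mem_filter, Finset.mem_erase]
    exact ⟨⟨fun h => hne (Subtype.coe_injective h), j.2⟩, hle⟩
  choose e he1 he2 using he
  -- key algebraic fact about the e i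
  have hIND : ∀ c : ↥T → O, (∑ i, c i • e i) = 0 →
      ∀ i, c i ∈ IsLocalRing.maximalIdeal O := by
    intro c hc
    by_contra hcon
    push_neg at hcon
    obtain ⟨i₁, hi₁⟩ := hcon
    set B : Finset ↥T := Finset.univ.filter (fun i => c i ∉ IsLocalRing.maximalIdeal O) with hB
    have hBne : B.Nonempty := ⟨i₁, by rw [hB, Finset.mem_filter]; exact ⟨Finset.mem_univ _, hi₁⟩⟩
    have him : (B.image (fun i : ↥T => (i : Ideal R))).Nonempty :=
      hBne.image (fun i : ↥T => (i : Ideal R))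
    obtain ⟨Q0, hQ0mem, hQ0max⟩ :=
      (B.image (fun i : ↥T => (i : Ideal R))).exists_maximal him
    obtain ⟨i0, hi0B, hi0⟩ := Finset.mem_image.mp hQ0mem
    subst hi0
    have hT0 := hT _ i0.2
    have hci0 : c i0 ∉ IsLocalRing.maximalIdeal O := by
      have := hi0B
      rw [hB, Finset.mem_filter] at this
      exact this.2
    have hterm : ∀ i : ↥T, i ≠ i0 → c i • e i ∈ (i0 : Ideal R) := by
      intro i hne
      by_cases hci : c i ∈ IsLocalRing.maximalIdeal O
      · have hmem : algebraMap O R (c i) ∈ (i0 : Ideal R) := by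
          have : c i ∈ (i0 : Ideal R).comap (algebraMap O R) := by rw [hT0.2.2]; exact hci
          exact this
        rw [Algebra.smul_def, Algebra.commutes]
        exact Ideal.mul_mem_left _ _ hmem
      · have hiB : i ∈ B := by rw [hB, Finset.mem_filter]; exact ⟨Finset.mem_univ _, hci⟩
        have hnle : ¬ ((i0 : Ideal R) ≤ (i : Ideal R)) := by
          intro hle
          have heq : (i0 : Ideal R) = (i : Ideal R) := by
            by_contra hne2
            exact hne2 (le_antisymm hle (hQ0max (Finset.mem_image_of_mem _ hiB) hle))
          exact hne (Subtype.coe_injective heq.symm)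
        have := he2 i i0 (Ne.symm hne) hnle
        rw [Algebra.smul_def]
        exact Ideal.mul_mem_left _ _ this
    have hsum : c i0 • e i0 ∈ (i0 : Ideal R) := by
      have h₁ := Finset.add_sum_erase Finset.univ (fun i => c i • e i) (Finset.mem_univ i0)
      rw [hc] at h₁
      have h₂ : c i0 • e i0 = - ∑ i ∈ Finset.univ.erase i0, c i • e i :=
        eq_neg_of_add_eq_zero_left h₁
      rw [h₂]
      exact Submodule.neg_mem _ (Submodule.sum_mem _ fun i hi =>
        hterm i (Finset.ne_of_mem_erase hi))
    have hall : ∀ r : R, algebraMap O R (c i0) * r * e i0 ∈ (i0 : Ideal R) := by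
      intro r
      have heq : algebraMap O R (c i0) * r * e i0 = r * (c i0 • e i0) := by
        rw [Algebra.smul_def, Algebra.commutes, mul_assoc]
      rw [heq]
      exact Ideal.mul_mem_left _ _ hsum
    rcases hT0.2.1.2 _ _ hall with h | h
    · have : c i0 ∈ (i0 : Ideal R).comap (algebraMap O R) := h
      rw [hT0.2.2] at this
      exact hci0 this
    · exact he1 i0 h
  -- linear independence of the 1 ⊗ e i
  have hli : LinearIndependent F (fun i : ↥T => (TensorProduct.mk O F R 1) (e i)) := by
    rw [Fintype.linearIndependent_iff]
    intro g hg
    by_contra hcon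
    push_neg at hcon
    obtain ⟨i₁, hgi₁⟩ := hcon
    obtain ⟨b, hb⟩ := IsLocalization.exist_integer_multiples (nonZeroDivisors O) Finset.univ g
    choose nn hnn using fun i : ↥T => hb i (Finset.mem_univ i)
    have hbb : algebraMap O F (b : O) ≠ 0 := by
      have hb0 : (b : O) ≠ 0 := mem_nonZeroDivisors_iff_ne_zero.mp b.2
      intro h
      exact hb0 (IsFractionRing.injective O F (by rw [h, map_zero]))
    set s : Finset ↥T := Finset.univ.filter (fun i => g i ≠ 0) with hsdef
    have hsne : s.Nonempty := ⟨i₁, by rw [hsdef, Finset.mem_filter]; exact ⟨Finset.mem_univ _, hgi₁⟩⟩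
    obtain ⟨j, hjs, hjd⟩ := aux_dvd_min s nn hsne
    have hgj : g j ≠ 0 := by
      have := hjs; rw [hsdef, Finset.mem_filter] at this; exact this.2
    have hdvd : ∀ i, nn j ∣ nn i := by
      intro i
      by_cases hgi : g i = 0
      · have : nn i = 0 := by
          apply IsFractionRing.injective O F
          rw [hnn i, hgi, smul_zero, map_zero]
        rw [this]; exact dvd_zero _
      · exact hjd i (by rw [hsdef, Finset.mem_filter]; exact ⟨Finset.mem_univ _, hgi⟩)
    choose a ha using hdvd
    have hrel : ∀ i, g i = g j * algebraMap O F (a i) := by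
      intro i
      apply mul_left_cancel₀ hbb
      calc algebraMap O F (b : O) * g i = (b : O) • g i := (Algebra.smul_def _ _).symm
        _ = algebraMap O F (nn i) := (hnn i).symm
        _ = algebraMap O F (nn j) * algebraMap O F (a i) := by rw [ha i, map_mul]
        _ = ((b : O) • g j) * algebraMap O F (a i) := by rw [hnn j]
        _ = algebraMap O F (b : O) * (g j * algebraMap O F (a i)) := by
            rw [Algebra.smul_def, mul_assoc]
    have hnnj : nn j ≠ 0 := by
      intro h
      apply hgj
      have : algebraMap O F (b : O) * g j = 0 := by
        rw [← Algebra.smul_def, ← hnn j, h, map_zero]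
      exact (mul_eq_zero.mp this).resolve_left hbb
    have haj : a j = 1 := by
      have h1 : nn j * a j = nn j * 1 := by rw [mul_one]; exact (ha j).symm
      exact mul_left_cancel₀ hnnj h1
    -- transform the relation
    have hg' : ∑ i, (g j * algebraMap O F (a i)) • (TensorProduct.mk O F R 1) (e i) = 0 := by
      rw [← hg]
      exact Finset.sum_congr rfl fun i _ => by rw [← hrel i]
    have hg'' : g j • ∑ i, a i • (TensorProduct.mk O F R 1) (e i) = 0 := by
      rw [Finset.smul_sum]
      rw [← hg']
      exact Finset.sum_congr rfl fun i _ => by rw [mul_smul, algebraMap_smul]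
    have h0 : ∑ i, a i • (TensorProduct.mk O F R 1) (e i) = 0 :=
      (smul_eq_zero.mp hg'').resolve_left hgj
    have h1 : (TensorProduct.mk O F R 1) (∑ i, a i • e i) = 0 := by
      rw [map_sum]
      rw [← h0]
      exact Finset.sum_congr rfl fun i _ => by rw [map_smul]
    haveI hlm : IsLocalizedModule (nonZeroDivisors O) (TensorProduct.mk O F R 1) :=
      (isLocalizedModule_iff_isBaseChange (nonZeroDivisors O) F _).mpr
        (TensorProduct.isBaseChange O R F)
    obtain ⟨t, ht0⟩ := (IsLocalizedModule.eq_zero_iff (nonZeroDivisors O)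
      (TensorProduct.mk O F R 1)).mp h1
    have hsum0 : (∑ i, a i • e i) = 0 := by
      have ht0' : (t : O) • (∑ i, a i • e i) = 0 := ht0
      exact (smul_eq_zero.mp ht0').resolve_left (mem_nonZeroDivisors_iff_ne_zero.mp t.2)
    have := hIND a hsum0 j
    rw [haj] at this
    exact (IsLocalRing.maximalIdeal.isMaximal O).ne_top ((Ideal.eq_top_iff_one _).mpr this)
  calc T.card = Fintype.card ↥T := (Fintype.card_coe T).symm
    _ ≤ Module.finrank F (F ⊗[O] R) := hli.fintype_card_le_finrank

/-- Let `O` be a valuation domain with fraction field `F`, maximal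
ideal `I_v`, and `R` a torsion-free `O`-algebra with `n = [R ⊗[O] F : F]` finite.
Then the set of prime ideals of `R` lying over `I_v` is finite, of size at most `n`. -/
theorem stmt7 {O F R : Type*} [CommRing O] [IsDomain O] [ValuationRing O]
    [Field F] [Algebra O F] [IsFractionRing O F]
    [Ring R] [Algebra O R] [NoZeroSMulDivisors O R]
    [Module.Finite F (F ⊗[O] R)] :
    ({Q : Ideal R | IsTwoSidedI Q ∧ IsPrimeNC Q ∧
        Q.comap (algebraMap O R) = IsLocalRing.maximalIdeal O}).Finite ∧
      ({Q : Ideal R | IsTwoSidedI Q ∧ IsPrimeNC Q ∧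
        Q.comap (algebraMap O R) = IsLocalRing.maximalIdeal O}).ncard ≤
          Module.finrank F (F ⊗[O] R) := by
  classical
  set S : Set (Ideal R) := {Q : Ideal R | IsTwoSidedI Q ∧ IsPrimeNC Q ∧
      Q.comap (algebraMap O R) = IsLocalRing.maximalIdeal O} with hSdef
  have key : ∀ T : Finset (Ideal R), (↑T : Set (Ideal R)) ⊆ S →
      T.card ≤ Module.finrank F (F ⊗[O] R) := by
    intro T hTS
    exact aux_card T fun Q hQ => hTS hQ
  have hfin : S.Finite := by
    by_contra hinf
    have hinf' : S.Infinite := hinf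
    obtain ⟨t, hts, htf, htc⟩ :=
      hinf'.exists_subset_ncard_eq (Module.finrank F (F ⊗[O] R) + 1)
    have hcard := key htf.toFinset (by simpa using hts)
    rw [← Set.ncard_eq_toFinset_card t htf] at hcard
    omega
  refine ⟨hfin, ?_⟩
  have := key hfin.toFinset (by simp)
  rwa [← Set.ncard_eq_toFinset_card S hfin] at this
end

section
/- Let S be a commutative valuation ring (a commutative ring whose ideals are totally ordered by inclusion, not necessarily a domain) and let R be an S-algebra. Then R satisfies going down over S if and only if every minimal prime ideal of R lies over the (unique) minimal prime ideal of S. -/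
section Aux

variable {S R : Type*} [CommRing S] [Ring R] [Algebra S R]

lemma aux_comap_prime {Q : Ideal R} (hp : IsPrimeNC Q) :
    (Q.comap (algebraMap S R)).IsPrime := by
  constructor
  · intro h
    apply hp.1
    rw [Ideal.eq_top_iff_one] at h ⊢
    simpa using h
  · intro a b hab
    have h : ∀ r : R, algebraMap S R a * r * algebraMap S R b ∈ Q := by
      intro r
      have : algebraMap S R a * r * algebraMap S R b = r * algebraMap S R (a * b) := by
        rw [map_mul, Algebra.commutes a r, mul_assoc]
      rw [this]
      exact Q.smul_mem r hab
    exact hp.2 _ _ h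

lemma aux_zorn_min {α : Type*} [PartialOrder α] (s : Set α)
    (ih : ∀ c ⊆ s, IsChain (· ≤ ·) c → ∀ y ∈ c, ∃ lb ∈ s, ∀ z ∈ c, lb ≤ z)
    (x : α) (hxs : x ∈ s) :
    ∃ m, m ≤ x ∧ m ∈ s ∧ ∀ z ∈ s, z ≤ m → z = m := by
  obtain ⟨m, hxm, hm⟩ := zorn_le_nonempty₀ (α := αᵒᵈ) s
    (fun c hc hchain y hy => by
      obtain ⟨lb, hlb, h⟩ := ih c hc
        (by exact fun a ha b hb hne => hchain hb ha (fun e => hne e.symm)) y hy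
      exact ⟨lb, hlb, h⟩) x hxs
  exact ⟨m, hxm, hm.1, fun z hz hzm => le_antisymm hzm (hm.2 hz hzm)⟩

lemma aux_twoSided_span (x : R) : IsTwoSidedI (Ideal.span (Set.range fun s => x * s)) := by
  intro a ha r
  induction ha using Submodule.span_induction with
  | mem y hy =>
      obtain ⟨s, rfl⟩ := hy
      exact Ideal.subset_span ⟨s * r, by rw [mul_assoc]⟩
  | zero => simpa using (Ideal.span _).zero_mem
  | add y z _ _ hy hz => rw [add_mul]; exact (Ideal.span _).add_mem hy hz
  | smul c y _ hy =>
      have : (c • y) * r = c • (y * r) := by simp [smul_eq_mul, mul_assoc]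
      rw [this]; exact (Ideal.span _).smul_mem c hy

lemma aux_prime_of_maximal (M : Set R)
    (hM : ∀ a ∈ M, ∀ b ∈ M, ∃ r, a * r * b ∈ M)
    (h1 : (1 : R) ∈ M)
    (Q : Ideal R) (hQts : IsTwoSidedI Q)
    (hdisj : ∀ m ∈ M, m ∉ Q)
    (hmax : ∀ J : Ideal R, IsTwoSidedI J → (∀ m ∈ M, m ∉ J) → Q ≤ J → J = Q) :
    IsPrimeNC Q := by
  constructor
  · intro h
    exact hdisj 1 h1 (h ▸ Submodule.mem_top)
  · intro x y hxy
    by_contra hcon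
    push_neg at hcon
    obtain ⟨hx, hy⟩ := hcon
    set Ix : Ideal R := Q ⊔ Ideal.span (Set.range fun s => x * s) with hIx
    set Iy : Ideal R := Q ⊔ Ideal.span (Set.range fun s => y * s) with hIy
    have hsupts : ∀ z : R, IsTwoSidedI (Q ⊔ Ideal.span (Set.range fun s => z * s)) := by
      intro z a ha r
      rw [Submodule.mem_sup] at ha ⊢
      obtain ⟨q, hq, b, hb, rfl⟩ := ha
      exact ⟨q * r, hQts q hq r, b * r, aux_twoSided_span z b hb r, (add_mul q b r).symm⟩
    have hxmem : x ∈ Ix := le_sup_right (α := Ideal R)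
      (Ideal.subset_span ⟨1, (mul_one x)⟩)
    have hymem : y ∈ Iy := le_sup_right (α := Ideal R)
      (Ideal.subset_span ⟨1, (mul_one y)⟩)
    have hIxM : ∃ m₁ ∈ M, m₁ ∈ Ix := by
      by_contra h
      push_neg at h
      have := hmax Ix (hsupts x) (fun m hm => h m hm) le_sup_left
      exact hx (this ▸ hxmem)
    have hIyM : ∃ m₂ ∈ M, m₂ ∈ Iy := by
      by_contra h
      push_neg at h
      have := hmax Iy (hsupts y) (fun m hm => h m hm) le_sup_left
      exact hy (this ▸ hymem)
    obtain ⟨m₁, hm₁M, hm₁⟩ := hIxM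
    obtain ⟨m₂, hm₂M, hm₂⟩ := hIyM
    obtain ⟨r, hr⟩ := hM m₁ hm₁M m₂ hm₂M
    rw [Submodule.mem_sup] at hm₁ hm₂
    obtain ⟨q₁, hq₁, a, ha, rfl⟩ := hm₁
    obtain ⟨q₂, hq₂, b, hb, rfl⟩ := hm₂
    have claim1 : ∀ b' ∈ Ideal.span (Set.range fun s => y * s), ∀ r' : R,
        x * r' * b' ∈ Q := by
      intro b' hb'
      induction hb' using Submodule.span_induction with
      | mem z hz =>
          obtain ⟨s, rfl⟩ := hz
          intro r'
          have : x * r' * (y * s) = (x * r' * y) * s := by noncomm_ring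
          rw [this]
          exact hQts _ (hxy r') s
      | zero => intro r'; simpa using Q.zero_mem
      | add u v _ _ hu hv =>
          intro r'
          rw [mul_add]
          exact Q.add_mem (hu r') (hv r')
      | smul c u _ hu =>
          intro r'
          have : x * r' * (c • u) = x * (r' * c) * u := by
            simp [smul_eq_mul, mul_assoc]
          rw [this]
          exact hu (r' * c)
    have claim2 : ∀ a' ∈ Ideal.span (Set.range fun s => x * s), ∀ r' : R,
        ∀ b' ∈ Ideal.span (Set.range fun s => y * s), a' * r' * b' ∈ Q := by
      intro a' ha'
      induction ha' using Submodule.span_induction with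
      | mem z hz =>
          obtain ⟨s, rfl⟩ := hz
          intro r' b' hb'
          have : x * s * r' * b' = x * (s * r') * b' := by noncomm_ring
          rw [this]
          exact claim1 b' hb' (s * r')
      | zero => intro r' b' _; simpa using Q.zero_mem
      | add u v _ _ hu hv =>
          intro r' b' hb'
          have : (u + v) * r' * b' = u * r' * b' + v * r' * b' := by noncomm_ring
          rw [this]
          exact Q.add_mem (hu r' b' hb') (hv r' b' hb')
      | smul c u _ hu =>
          intro r' b' hb'
          have : (c • u) * r' * b' = c • (u * r' * b') := by
            simp [smul_eq_mul, mul_assoc]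
          rw [this]
          exact Q.smul_mem c (hu r' b' hb')
    have hexp : (q₁ + a) * r * (q₂ + b) =
        q₁ * (r * (q₂ + b)) + ((a * r) * q₂ + a * r * b) := by noncomm_ring
    have hmem : (q₁ + a) * r * (q₂ + b) ∈ Q := by
      rw [hexp]
      exact Q.add_mem (hQts q₁ hq₁ _)
        (Q.add_mem (Q.smul_mem (a * r) hq₂) (claim2 a ha r b hb))
    exact hdisj _ hr hmem

/-- In a valuation ring, elements of `P·R` can be written `algebraMap p * x`. -/
lemma aux_map_rep (hval : ∀ I J : Ideal S, I ≤ J ∨ J ≤ I) (P : Ideal S) :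
    ∀ y ∈ Ideal.map (algebraMap S R) P, ∃ p ∈ P, ∃ x : R, y = algebraMap S R p * x := by
  have hdvd : ∀ p q : S, p ∣ q ∨ q ∣ p := by
    intro p q
    rcases hval (Ideal.span {p}) (Ideal.span {q}) with h | h
    · exact Or.inr (Ideal.mem_span_singleton.mp (h (Ideal.mem_span_singleton_self p)))
    · exact Or.inl (Ideal.mem_span_singleton.mp (h (Ideal.mem_span_singleton_self q)))
  set T : Ideal R :=
    { carrier := {y | ∃ p ∈ P, ∃ x : R, y = algebraMap S R p * x}
      zero_mem' := ⟨0, P.zero_mem, 0, by simp⟩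
      add_mem' := by
        rintro y z ⟨p, hp, x, rfl⟩ ⟨q, hq, x', rfl⟩
        rcases hdvd p q with ⟨u, rfl⟩ | ⟨u, rfl⟩
        · exact ⟨p, hp, x + algebraMap S R u * x', by rw [map_mul]; noncomm_ring⟩
        · exact ⟨q, hq, algebraMap S R u * x + x', by rw [map_mul]; noncomm_ring⟩
      smul_mem' := by
        rintro r y ⟨p, hp, x, rfl⟩
        refine ⟨p, hp, r * x, ?_⟩
        simp only [smul_eq_mul]
        rw [← mul_assoc, ← Algebra.commutes p r, mul_assoc] } with hT
  intro y hy
  have hle : Ideal.map (algebraMap S R) P ≤ T := by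
    rw [Ideal.map_le_iff_le_comap]
    intro p hp
    exact ⟨p, hp, 1, (mul_one _).symm⟩
  exact hle hy

/-- The minimal prime of a valuation ring. -/
lemma aux_sInf_primes (hval : ∀ I J : Ideal S, I ≤ J ∨ J ≤ I)
    (hne : ∃ p : Ideal S, p.IsPrime) :
    (sInf {p : Ideal S | p.IsPrime}).IsPrime := by
  obtain ⟨p₀, hp₀⟩ := hne
  constructor
  · intro h
    exact hp₀.ne_top (top_le_iff.mp (h ▸ sInf_le (show p₀ ∈ _ from hp₀)))
  · intro a b hab
    by_cases ha : a ∈ sInf {p : Ideal S | p.IsPrime}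
    · exact Or.inl ha
    · right
      rw [Submodule.mem_sInf] at ha
      push_neg at ha
      obtain ⟨p, hp, hap⟩ := ha
      rw [Submodule.mem_sInf]
      intro q hq
      rcases hval q p with h | h
      · rcases hq.mem_or_mem (Submodule.mem_sInf.mp hab q hq) with h' | h'
        · exact absurd (h h') hap
        · exact h'
      · rcases hp.mem_or_mem (Submodule.mem_sInf.mp hab p hp) with h' | h'
        · exact absurd h' hap
        · exact h h'

/-- Centrality helper. -/
lemma aux_central (s : S) (u v : R) :
    u * (algebraMap S R s * v) = algebraMap S R s * (u * v) := by
  rw [← mul_assoc, ← Algebra.commutes s u, mul_assoc]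

end Aux

/-- Let `S` be a commutative valuation ring (ideals totally ordered
by inclusion, not necessarily a domain) and `R` an `S`-algebra.  Then `R` satisfies
going down over `S` iff every minimal prime ideal of `R` lies over the (unique)
minimal prime ideal of `S`. -/
theorem stmt10 {S R : Type*} [CommRing S] [Ring R] [Algebra S R]
    (hval : ∀ I J : Ideal S, I ≤ J ∨ J ≤ I) :
    (∀ P₁ P₂ : Ideal S, P₁.IsPrime → P₂.IsPrime → P₁ < P₂ →
        ∀ Q₂ : Ideal R, IsTwoSidedI Q₂ → IsPrimeNC Q₂ →
          Q₂.comap (algebraMap S R) = P₂ →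
          ∃ Q₁ : Ideal R, IsTwoSidedI Q₁ ∧ IsPrimeNC Q₁ ∧ Q₁ < Q₂ ∧
            Q₁.comap (algebraMap S R) = P₁) ↔
      (∀ Q : Ideal R, IsTwoSidedI Q → IsPrimeNC Q →
          (∀ Q' : Ideal R, IsTwoSidedI Q' → IsPrimeNC Q' → Q' ≤ Q → Q' = Q) →
        ∀ P : Ideal S, P.IsPrime → (∀ P' : Ideal S, P'.IsPrime → P' ≤ P → P' = P) →
          Q.comap (algebraMap S R) = P) := by
  constructor
  · -- going down implies minimal primes lie over the minimal prime
    intro hGD Q hQts hQpr hQmin P hP hPmin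
    have hPQ : (Q.comap (algebraMap S R)).IsPrime := aux_comap_prime hQpr
    rcases hval (Q.comap (algebraMap S R)) P with h | h
    · exact hPmin _ hPQ h
    · rcases eq_or_lt_of_le h with heq | hlt
      · exact heq.symm
      · obtain ⟨Q₁, hts, hpr, hlt', _⟩ := hGD P _ hP hPQ hlt Q hQts hQpr rfl
        exact absurd (hQmin Q₁ hts hpr hlt'.le) hlt'.ne
  · -- minimal primes lying over the minimal prime implies going down
    intro hMin P₁ P₂ hP₁ hP₂ hlt Q₂ hQ₂ts hQ₂pr hcomap
    have hdvd : ∀ p q : S, p ∣ q ∨ q ∣ p := by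
      intro p q
      rcases hval (Ideal.span {p}) (Ideal.span {q}) with h | h
      · exact Or.inr (Ideal.mem_span_singleton.mp (h (Ideal.mem_span_singleton_self p)))
      · exact Or.inl (Ideal.mem_span_singleton.mp (h (Ideal.mem_span_singleton_self q)))
    have h1P₁ : (1 : S) ∉ P₁ := (Ideal.ne_top_iff_one P₁).mp hP₁.ne_top
    have h1Q₂ : (1 : R) ∉ Q₂ := (Ideal.ne_top_iff_one Q₂).mp hQ₂pr.1
    -- the minimal prime of S
    set P₀ := sInf {p : Ideal S | p.IsPrime} with hP₀def
    have hP₀pr : P₀.IsPrime := aux_sInf_primes hval ⟨P₂, hP₂⟩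
    have hP₀min : ∀ P' : Ideal S, P'.IsPrime → P' ≤ P₀ → P' = P₀ :=
      fun P' h h' => le_antisymm h' (sInf_le h)
    have hP₀le : P₀ ≤ P₁ := sInf_le hP₁
    -- a minimal prime Q₀ of R below Q₂
    have zorn1 : ∀ c ⊆ {Q : Ideal R | IsTwoSidedI Q ∧ IsPrimeNC Q ∧ Q ≤ Q₂},
        IsChain (· ≤ ·) c → ∀ y ∈ c,
        ∃ lb ∈ {Q : Ideal R | IsTwoSidedI Q ∧ IsPrimeNC Q ∧ Q ≤ Q₂}, ∀ z ∈ c, lb ≤ z := by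
      intro c hc hchain y hy
      refine ⟨sInf c, ⟨?_, ⟨?_, ?_⟩, le_trans (sInf_le hy) (hc hy).2.2⟩,
        fun z hz => sInf_le hz⟩
      · intro a ha r
        rw [Submodule.mem_sInf] at ha ⊢
        intro Q hQ
        exact (hc hQ).1 a (ha Q hQ) r
      · intro h
        exact (hc hy).2.1.1 (top_le_iff.mp (h ▸ sInf_le hy))
      · intro x z hxz
        by_cases hx : x ∈ sInf c
        · exact Or.inl hx
        · right
          rw [Submodule.mem_sInf] at hx
          push_neg at hx
          obtain ⟨Q, hQ, hxQ⟩ := hx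
          rw [Submodule.mem_sInf]
          intro Q' hQ'
          rcases eq_or_ne Q Q' with rfl | hne
          · rcases (hc hQ).2.1.2 x z
              (fun r => Submodule.mem_sInf.mp (hxz r) Q hQ) with h' | h'
            · exact absurd h' hxQ
            · exact h'
          · rcases hchain hQ hQ' hne with h | h
            · rcases (hc hQ).2.1.2 x z
                (fun r => Submodule.mem_sInf.mp (hxz r) Q hQ) with h' | h'
              · exact absurd h' hxQ
              · exact h h'
            · rcases (hc hQ').2.1.2 x z
                (fun r => Submodule.mem_sInf.mp (hxz r) Q' hQ') with h' | h'
              · exact absurd (h h') hxQ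
              · exact h'
    obtain ⟨Q₀, hQ₀le', hQ₀mem, hQ₀min⟩ :=
      aux_zorn_min {Q : Ideal R | IsTwoSidedI Q ∧ IsPrimeNC Q ∧ Q ≤ Q₂} zorn1
        Q₂ ⟨hQ₂ts, hQ₂pr, le_rfl⟩
    obtain ⟨hQ₀ts, hQ₀pr, hQ₀le⟩ := hQ₀mem
    have hQ₀gmin : ∀ Q' : Ideal R, IsTwoSidedI Q' → IsPrimeNC Q' → Q' ≤ Q₀ → Q' = Q₀ :=
      fun Q' a b h => hQ₀min Q' ⟨a, b, h.trans hQ₀le⟩ h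
    have hQ₀comap : Q₀.comap (algebraMap S R) = P₀ :=
      hMin Q₀ hQ₀ts hQ₀pr hQ₀gmin P₀ hP₀pr hP₀min
    -- the m-system
    set M : Set R := {z | ∃ s : S, s ∉ P₁ ∧ ∃ t : R, t ∉ Q₂ ∧ z = algebraMap S R s * t}
      with hMdef
    have h1M : (1 : R) ∈ M := ⟨1, h1P₁, 1, h1Q₂, by simp⟩
    have hmsys : ∀ a ∈ M, ∀ b ∈ M, ∃ r, a * r * b ∈ M := by
      rintro _ ⟨s₁, hs₁, t₁, ht₁, rfl⟩ _ ⟨s₂, hs₂, t₂, ht₂, rfl⟩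
      have hex : ∃ r, t₁ * r * t₂ ∉ Q₂ := by
        by_contra h
        push_neg at h
        rcases hQ₂pr.2 t₁ t₂ h with h' | h'
        · exact ht₁ h'
        · exact ht₂ h'
      obtain ⟨r, hr⟩ := hex
      refine ⟨r, s₁ * s₂, fun h => ?_, t₁ * r * t₂, hr, ?_⟩
      · rcases hP₁.mem_or_mem h with h' | h'
        · exact hs₁ h'
        · exact hs₂ h'
      · rw [map_mul]
        simp only [mul_assoc]
        rw [aux_central s₂ r t₂, aux_central s₂ t₁ (r * t₂)]
    -- the crucial disjointness
    have hdisjbase : ∀ m ∈ M, m ∉ Ideal.map (algebraMap S R) P₁ := by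
      rintro _ ⟨s, hs, t, ht, rfl⟩ hmem
      obtain ⟨p, hp, x, heq⟩ := aux_map_rep hval P₁ _ hmem
      rcases hdvd s p with ⟨u, rfl⟩ | ⟨u, hu⟩
      · -- s divides p : p = s * u, u ∈ P₁
        have huP : u ∈ P₁ := by
          rcases hP₁.mem_or_mem hp with h' | h'
          · exact absurd h' hs
          · exact h'
        have heq' : algebraMap S R s * t = algebraMap S R s * (algebraMap S R u * x) := by
          rw [heq, map_mul, mul_assoc]
        have hz : algebraMap S R s * (t - algebraMap S R u * x) = 0 := by
          rw [mul_sub, heq', sub_self]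
        have huxQ₂ : algebraMap S R u * x ∈ Q₂ := by
          have h' : algebraMap S R u ∈ Q₂ := by
            have : u ∈ Q₂.comap (algebraMap S R) := by rw [hcomap]; exact hlt.le huP
            exact this
          rw [Algebra.commutes u x]
          exact Q₂.smul_mem x h'
        have hznQ₂ : t - algebraMap S R u * x ∉ Q₂ := by
          intro h
          exact ht (by simpa using Q₂.add_mem h huxQ₂)
        have hall : ∀ r : R, algebraMap S R s * r * (t - algebraMap S R u * x) ∈ Q₀ := by
          intro r
          have : algebraMap S R s * r * (t - algebraMap S R u * x) =
              r * (algebraMap S R s * (t - algebraMap S R u * x)) := by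
            rw [Algebra.commutes s r, mul_assoc]
          rw [this, hz, mul_zero]
          exact Q₀.zero_mem
        rcases hQ₀pr.2 _ _ hall with h | h
        · exact hs (hP₀le (by rw [← hQ₀comap]; exact h))
        · exact hznQ₂ (hQ₀le h)
      · -- p divides s : s = p * u ∈ P₁, contradiction
        exact hs (hu ▸ Ideal.mul_mem_right _ _ hp)
    -- two-sidedness of the base ideal
    have hbasets : IsTwoSidedI (Ideal.map (algebraMap S R) P₁) := by
      intro a ha r
      have hspan : Ideal.map (algebraMap S R) P₁ =
          Ideal.span ((algebraMap S R) '' P₁) := rfl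
      rw [hspan] at ha ⊢
      induction ha using Submodule.span_induction with
      | mem z hz =>
          obtain ⟨p, hp, rfl⟩ := hz
          rw [Algebra.commutes p r]
          exact (Ideal.span _).smul_mem r (Ideal.subset_span ⟨p, hp, rfl⟩)
      | zero => simpa using (Ideal.span _).zero_mem
      | add u v _ _ hu hv => rw [add_mul]; exact (Ideal.span _).add_mem hu hv
      | smul c u _ hu =>
          have : (c • u) * r = c • (u * r) := by simp [smul_eq_mul, mul_assoc]
          rw [this]
          exact (Ideal.span _).smul_mem c hu
    -- Zorn to get a maximal two-sided ideal containing P₁R and disjoint from M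
    set s' : Set (Ideal R) :=
      {I : Ideal R | IsTwoSidedI I ∧ Ideal.map (algebraMap S R) P₁ ≤ I ∧ ∀ m ∈ M, m ∉ I}
      with hs'def
    have hbase : Ideal.map (algebraMap S R) P₁ ∈ s' := ⟨hbasets, le_rfl, hdisjbase⟩
    have zorn2 : ∀ c ⊆ s', IsChain (· ≤ ·) c → ∀ y ∈ c, ∃ ub ∈ s', ∀ z ∈ c, z ≤ ub := by
      intro c hc hchain y hy
      have hdir : DirectedOn (· ≤ ·) c := hchain.directedOn
      have hmem : ∀ a : R, a ∈ sSup c → ∃ Q ∈ c, a ∈ Q := fun a ha =>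
        (Submodule.mem_sSup_of_directed ⟨y, hy⟩ hdir).mp ha
      refine ⟨sSup c, ⟨?_, (hc hy).2.1.trans (le_sSup hy), ?_⟩, fun z hz => le_sSup hz⟩
      · intro a ha r
        obtain ⟨Q, hQ, haQ⟩ := hmem a ha
        exact le_sSup hQ ((hc hQ).1 a haQ r)
      · intro m hmM hmsup
        obtain ⟨Q, hQ, hmQ⟩ := hmem m hmsup
        exact (hc hQ).2.2 m hmM hmQ
    obtain ⟨Q₁, hQ₁ge, hQ₁max⟩ :=
      zorn_le_nonempty₀ s' zorn2 (Ideal.map (algebraMap S R) P₁) hbase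
    obtain ⟨hQ₁ts, hQ₁maple, hQ₁disj⟩ := hQ₁max.1
    have hQ₁pr : IsPrimeNC Q₁ := by
      refine aux_prime_of_maximal M hmsys h1M Q₁ hQ₁ts hQ₁disj ?_
      intro J hJts hJdisj hle
      exact le_antisymm (hQ₁max.2 ⟨hJts, hQ₁maple.trans hle, hJdisj⟩ hle) hle
    have hQ₁leQ₂ : Q₁ ≤ Q₂ := by
      intro q hq
      by_contra hqn
      exact hQ₁disj q ⟨1, h1P₁, q, hqn, by simp⟩ hq
    have hQ₁comap : Q₁.comap (algebraMap S R) = P₁ := by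
      apply le_antisymm
      · intro s hsmem
        by_contra hsn
        exact hQ₁disj (algebraMap S R s) ⟨s, hsn, 1, h1Q₂, by simp⟩ hsmem
      · exact Ideal.map_le_iff_le_comap.mp hQ₁maple
    refine ⟨Q₁, hQ₁ts, hQ₁pr, lt_of_le_of_ne hQ₁leQ₂ ?_, hQ₁comap⟩
    intro h
    rw [h, hcomap] at hQ₁comap
    exact hlt.ne hQ₁comap.symm
end

section
/- Let S and R be rings (not necessarily commutative) and f : S → R a ring homomorphism (not necessarily unital) with f(S) contained in the center of R. Then f satisfies strong going between (SGB) if and only if for every prime ideal Q of R, the induced map S/f⁻¹(Q) → R/Q satisfies going down. -/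
/-- The preimage `f⁻¹(Q)` of an ideal along a (not necessarily unital) ring
homomorphism, as an ideal. -/
def preimageIdeal {S R : Type*} [Ring S] [Ring R] (f : S →ₙ+* R) (Q : Ideal R) :
    Ideal S where
  carrier := f ⁻¹' Q
  add_mem' ha hb := by
    simp only [Set.mem_preimage, map_add] at *
    exact Q.add_mem ha hb
  zero_mem' := by simp only [Set.mem_preimage, map_zero]; exact Q.zero_mem
  smul_mem' c x hx := by
    simp only [Set.mem_preimage, smul_eq_mul, map_mul] at *
    exact Q.mul_mem_left _ hx

lemma mem_preimageIdeal {S R : Type*} [Ring S] [Ring R] (f : S →ₙ+* R) (Q : Ideal R)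
    (x : S) : x ∈ preimageIdeal f Q ↔ f x ∈ Q := Iff.rfl

lemma preimageIdeal_mono {S R : Type*} [Ring S] [Ring R] (f : S →ₙ+* R) {Q Q' : Ideal R}
    (h : Q ≤ Q') : preimageIdeal f Q ≤ preimageIdeal f Q' := fun _ hx => h hx

lemma preimageIdeal_twoSided {S R : Type*} [Ring S] [Ring R] (f : S →ₙ+* R) {Q : Ideal R}
    (hQ : IsTwoSidedI Q) : IsTwoSidedI (preimageIdeal f Q) := by
  intro a ha r
  rw [mem_preimageIdeal] at ha ⊢
  rw [map_mul]
  exact hQ _ ha _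

lemma preimageIdeal_prime {S R : Type*} [Ring S] [Ring R] (f : S →ₙ+* R)
    (hcentral : ∀ s : S, f s ∈ Set.center R) {Q : Ideal R}
    (h2 : IsTwoSidedI Q) (hp : IsPrimeNC Q) (hne : preimageIdeal f Q ≠ ⊤) :
    IsPrimeNC (preimageIdeal f Q) := by
  refine ⟨hne, fun x y h => ?_⟩
  -- First show f (x*y) ∈ Q
  have hsq : f (x * y) * f (x * y) ∈ Q := by
    have h1 := h (y * x)
    rw [mem_preimageIdeal] at h1
    have : x * (y * x) * y = x * y * (x * y) := by noncomm_ring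
    rw [this, map_mul] at h1
    exact h1
  have hxy : f (x * y) ∈ Q := by
    rcases hp.2 (f (x * y)) (f (x * y)) (fun r => by
      rw [(hcentral (x * y)).comm r, mul_assoc]
      exact Q.mul_mem_left r hsq) with h' | h'
    · exact h'
    · exact h'
  rcases hp.2 (f x) (f y) (fun r => by
    rw [(hcentral x).comm r, mul_assoc, ← map_mul]
    exact Q.mul_mem_left r hxy) with h' | h'
  · exact Or.inl h'
  · exact Or.inr h'

/-- Let `S`, `R` be rings and `f : S → R` a (not necessarily
unital) homomorphism with central image.  Then `f` satisfies strong going between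
(SGB) iff for every prime `Q` of `R` the induced map `S/f⁻¹(Q) → R/Q` satisfies
going down (expressed via the correspondence between primes of the quotients and
primes containing `Q`, resp. `f⁻¹(Q)`). -/
theorem stmt11 {S R : Type*} [Ring S] [Ring R] (f : S →ₙ+* R)
    (hcentral : ∀ s : S, f s ∈ Set.center R) :
    (∀ P₁ P₂ P₃ : Ideal S, IsTwoSidedI P₁ → IsPrimeNC P₁ → IsTwoSidedI P₂ → IsPrimeNC P₂ →
        IsTwoSidedI P₃ → IsPrimeNC P₃ → P₁ < P₂ → P₂ < P₃ →
        ∀ Q₁ Q₃ : Ideal R, IsTwoSidedI Q₁ → IsPrimeNC Q₁ → IsTwoSidedI Q₃ → IsPrimeNC Q₃ →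
          Q₁ < Q₃ → preimageIdeal f Q₁ = P₁ → preimageIdeal f Q₃ = P₃ →
          ∃ Q₂ : Ideal R, IsTwoSidedI Q₂ ∧ IsPrimeNC Q₂ ∧ Q₁ < Q₂ ∧ Q₂ < Q₃ ∧
            preimageIdeal f Q₂ = P₂) ↔
      (∀ Q : Ideal R, IsTwoSidedI Q → IsPrimeNC Q →
        ∀ P₁ P₂ : Ideal S, IsTwoSidedI P₁ → IsPrimeNC P₁ → IsTwoSidedI P₂ → IsPrimeNC P₂ →
          preimageIdeal f Q ≤ P₁ → P₁ < P₂ →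
          ∀ Q₂ : Ideal R, IsTwoSidedI Q₂ → IsPrimeNC Q₂ → Q ≤ Q₂ →
            preimageIdeal f Q₂ = P₂ →
            ∃ Q₁ : Ideal R, IsTwoSidedI Q₁ ∧ IsPrimeNC Q₁ ∧ Q ≤ Q₁ ∧ Q₁ < Q₂ ∧
              preimageIdeal f Q₁ = P₁) := by
  constructor
  · -- SGB → going down on quotients
    intro sgb Q hQ2 hQp P₁ P₂ h12 h1p h22 h2p hQP₁ h12lt Q₂ hQ₂2 hQ₂p hQQ₂ hpre₂
    rcases eq_or_lt_of_le hQP₁ with heq | hlt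
    · -- f⁻¹(Q) = P₁ : take Q₁ := Q
      refine ⟨Q, hQ2, hQp, le_refl Q, lt_of_le_of_ne hQQ₂ ?_, heq⟩
      intro hQeq
      apply h12lt.ne
      rw [← heq, ← hpre₂, hQeq]
    · -- f⁻¹(Q) < P₁ : apply SGB to f⁻¹(Q) < P₁ < P₂ with Q < Q₂
      have hQQ₂lt : Q < Q₂ := by
        refine lt_of_le_of_ne hQQ₂ ?_
        intro hQeq
        exact absurd (hpre₂ ▸ hQeq ▸ hlt.trans h12lt) (lt_irrefl _)
      have hprene : preimageIdeal f Q ≠ ⊤ :=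
        fun h => h1p.1 (top_le_iff.mp (h ▸ hQP₁))
      obtain ⟨Q₁, hq1, hq2, hq3, hq4, hq5⟩ :=
        sgb (preimageIdeal f Q) P₁ P₂ (preimageIdeal_twoSided f hQ2)
          (preimageIdeal_prime f hcentral hQ2 hQp hprene) h12 h1p h22 h2p hlt h12lt
          Q Q₂ hQ2 hQp hQ₂2 hQ₂p hQQ₂lt rfl hpre₂
      exact ⟨Q₁, hq1, hq2, hq3.le, hq4, hq5⟩
  · -- going down on quotients → SGB
    intro gd P₁ P₂ P₃ h12 h1p h22 h2p h32 h3p h12lt h23lt Q₁ Q₃ hQ₁2 hQ₁p hQ₃2 hQ₃p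
      h13lt hpre₁ hpre₃
    obtain ⟨Q₂, hq1, hq2, hq3, hq4, hq5⟩ :=
      gd Q₁ hQ₁2 hQ₁p P₂ P₃ h22 h2p h32 h3p (hpre₁ ▸ h12lt.le) h23lt
        Q₃ hQ₃2 hQ₃p h13lt.le hpre₃
    refine ⟨Q₂, hq1, hq2, lt_of_le_of_ne hq3 ?_, hq4, hq5⟩
    intro heq
    apply h12lt.ne
    rw [← hpre₁, heq, hq5]
end

section
/- Let S be a commutative ring, R an S-algebra, P₀ ⊆ P₁ prime ideals of S, and I₀ a two-sided ideal of R lying over P₀. Then the ideal I₀ + P₁R lies over P₁ (i.e., its contraction to S equals P₁) if and only if there exists a prime ideal Q₁ of R containing I₀ with Q₁ ∩ S = P₁. -/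
/-- The two-sided ideal generated by an element. -/
def genT {R : Type*} [Ring R] (x : R) : Ideal R :=
  Ideal.span {z : R | ∃ r s : R, z = r * x * s}

lemma mem_genT {R : Type*} [Ring R] (x : R) : x ∈ genT x :=
  Ideal.subset_span ⟨1, 1, by simp⟩

lemma genT_twoSided {R : Type*} [Ring R] (x : R) : IsTwoSidedI (genT x) := by
  intro a ha r
  induction ha using Submodule.span_induction with
  | mem z hz =>
      obtain ⟨u, v, rfl⟩ := hz
      exact Ideal.subset_span ⟨u, v * r, by simp only [mul_assoc]⟩
  | zero => simpa using (genT x).zero_mem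
  | add a b _ _ ha hb => simpa [add_mul] using (genT x).add_mem ha hb
  | smul c a _ ha => simpa [smul_eq_mul, mul_assoc] using (genT x).smul_mem c ha

lemma genT_mul_mem {R : Type*} [Ring R] {Q : Ideal R} (hQ : IsTwoSidedI Q)
    {x y : R} (h : ∀ r : R, x * r * y ∈ Q) {a b : R}
    (ha : a ∈ genT x) (hb : b ∈ genT y) : a * b ∈ Q := by
  revert a
  induction hb using Submodule.span_induction with
  | mem z hz =>
      obtain ⟨u, v, rfl⟩ := hz
      intro a ha
      induction ha using Submodule.span_induction with
      | mem w hw =>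
          obtain ⟨p, q, rfl⟩ := hw
          have heq : p * x * q * (u * y * v) = p * (x * (q * u) * y) * v := by
            simp only [mul_assoc]
          rw [heq]
          exact hQ _ (Q.smul_mem p (h (q * u))) v
      | zero => simpa using Q.zero_mem
      | add a b _ _ ha hb => simpa [add_mul] using Q.add_mem ha hb
      | smul c a _ ha => simpa [smul_eq_mul, mul_assoc] using Q.smul_mem c ha
  | zero => intro a _; simpa using Q.zero_mem
  | add b c _ _ hb hc =>
      intro a ha
      simpa [mul_add] using Q.add_mem (hb ha) (hc ha)
  | smul c b hbmem hb =>
      intro a ha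
      have : a * (c • b) = (a * c) * b := by
        simp [smul_eq_mul, mul_assoc]
      rw [this]
      exact hb (genT_twoSided x a ha c)
  
/-- Let `S` be a commutative ring, `R` an `S`-algebra,
`P₀ ⊆ P₁` primes of `S` and `I₀` a two-sided ideal of `R` lying over `P₀`.
Then `I₀ + P₁R` lies over `P₁` iff there is a prime ideal `Q₁ ⊇ I₀` of `R`
with `Q₁ ∩ S = P₁`. -/
theorem stmt13 {S R : Type*} [CommRing S] [Ring R] [Algebra S R]
    (P₀ P₁ : Ideal S) (hP₀ : P₀.IsPrime) (hP₁ : P₁.IsPrime) (hle : P₀ ≤ P₁)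
    (I₀ : Ideal R) (hI₀ts : IsTwoSidedI I₀)
    (hover₀ : I₀.comap (algebraMap S R) = P₀) :
    (I₀ + Ideal.map (algebraMap S R) P₁).comap (algebraMap S R) = P₁ ↔
      ∃ Q₁ : Ideal R, IsTwoSidedI Q₁ ∧ IsPrimeNC Q₁ ∧ I₀ ≤ Q₁ ∧
        Q₁.comap (algebraMap S R) = P₁ := by
  set f := algebraMap S R
  constructor
  · intro hJ
    set J : Ideal R := I₀ + Ideal.map f P₁ with hJdef
    -- the collection of two-sided ideals containing J contracting inside P₁
    set 𝒮 : Set (Ideal R) :=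
      {Q : Ideal R | IsTwoSidedI Q ∧ J ≤ Q ∧ Q.comap f ≤ P₁} with h𝒮
    have hJts : IsTwoSidedI J := by
      intro a ha r
      rw [hJdef, Submodule.add_eq_sup, Submodule.mem_sup] at ha ⊢
      obtain ⟨u, hu, v, hv, rfl⟩ := ha
      refine ⟨u * r, hI₀ts u hu r, v * r, ?_, by rw [add_mul]⟩
      -- we need right-multiplication stability of map f P₁.
      have : ∀ v ∈ Ideal.map f P₁, ∀ r : R, v * r ∈ Ideal.map f P₁ := by
        intro v hv r
        induction hv using Submodule.span_induction with
        | mem z hz =>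
            obtain ⟨s, hs, rfl⟩ := hz
            rw [Algebra.commutes s r]
            exact Ideal.mul_mem_left _ r (Ideal.mem_map_of_mem f hs)
        | zero => simpa using Submodule.zero_mem _
        | add a b _ _ ha hb => simpa [add_mul] using Submodule.add_mem _ ha hb
        | smul c a _ ha =>
            simpa [smul_eq_mul, mul_assoc] using Submodule.smul_mem _ c ha
      exact this v hv r
    have hJS : J ∈ 𝒮 := ⟨hJts, le_rfl, hJ.le⟩
    obtain ⟨m, hJm, hm⟩ := zorn_le_nonempty₀ 𝒮 (fun c hc𝒮 hchain y hy => by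
      refine ⟨sSup c, ⟨?_, ?_, ?_⟩, fun z hz => le_sSup hz⟩
      · intro a ha r
        rw [Submodule.mem_sSup_of_directed ⟨y, hy⟩ hchain.directedOn] at ha ⊢
        obtain ⟨Q, hQc, haQ⟩ := ha
        exact ⟨Q, hQc, (hc𝒮 hQc).1 a haQ r⟩
      · exact le_trans (hc𝒮 hy).2.1 (le_sSup hy)
      · intro s hs
        rw [Ideal.mem_comap, Submodule.mem_sSup_of_directed ⟨y, hy⟩ hchain.directedOn] at hs
        obtain ⟨Q, hQc, hsQ⟩ := hs
        exact (hc𝒮 hQc).2.2 hsQ) J hJS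
    obtain ⟨hmts, hJm', hmP⟩ := hm.prop
    have hmP' : m.comap f = P₁ := le_antisymm hmP (by
      calc P₁ = J.comap f := hJ.symm
        _ ≤ m.comap f := Ideal.comap_mono hJm')
    refine ⟨m, hmts, ⟨?_, ?_⟩, le_trans (le_trans le_sup_left hJm') le_rfl, hmP'⟩
    · intro htop
      have : (1 : S) ∈ P₁ := by
        rw [← hmP', htop]; exact Submodule.mem_top
      exact hP₁.ne_top (Ideal.eq_top_of_isUnit_mem _ this isUnit_one)
    · intro x y hxy
      by_contra hcon
      push_neg at hcon
      obtain ⟨hx, hy⟩ := hcon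
      -- enlarge by the two-sided ideal generated by x resp. y
      have key : ∀ z : R, z ∉ m → ∃ s : S, s ∉ P₁ ∧ f s ∈ m ⊔ genT z := by
        intro z hz
        have hts : IsTwoSidedI (m ⊔ genT z) := by
          intro a ha r
          rw [Submodule.mem_sup] at ha ⊢
          obtain ⟨u, hu, v, hv, rfl⟩ := ha
          exact ⟨u * r, hmts u hu r, v * r, genT_twoSided z v hv r, by rw [add_mul]⟩
        have hnot : m ⊔ genT z ∉ 𝒮 := by
          intro hmem
          have heq := hm.eq_of_le hmem le_sup_left
          have : z ∈ m := by
            rw [heq]; exact Submodule.mem_sup_right (mem_genT z)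
          exact hz this
        have : ¬ (m ⊔ genT z).comap f ≤ P₁ := fun h' =>
          hnot ⟨hts, le_trans hJm' le_sup_left, h'⟩
        obtain ⟨s, hs1, hs2⟩ := Set.not_subset.mp this
        exact ⟨s, hs2, hs1⟩
      obtain ⟨s, hsP, hsm⟩ := key x hx
      obtain ⟨t, htP, htm⟩ := key y hy
      -- the product f s * f t lies in m
      rw [Submodule.mem_sup] at hsm htm
      obtain ⟨u, hu, a, ha, hsa⟩ := hsm
      obtain ⟨v, hv, b, hb, htb⟩ := htm
      have hprod : f s * f t ∈ m := by
        rw [← hsa, ← htb]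
        have : (u + a) * (v + b) = (u * v + u * b) + (a * v + a * b) := by
          rw [add_mul, mul_add, mul_add]
        rw [this]
        refine Submodule.add_mem _ (Submodule.add_mem _ ?_ ?_) (Submodule.add_mem _ ?_ ?_)
        · exact hmts u hu v
        · exact hmts u hu b
        · exact Ideal.mul_mem_left _ a hv
        · exact genT_mul_mem hmts hxy ha hb
      have : s * t ∈ P₁ := hmP (by rw [Ideal.mem_comap, map_mul]; exact hprod)
      rcases hP₁.mem_or_mem this with h | h
      · exact hsP h
      · exact htP h
  · rintro ⟨Q₁, hQts, ⟨hQne, hQpr⟩, hIQ, hQP⟩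
    apply le_antisymm
    · refine Ideal.comap_mono ?_ |>.trans hQP.le
      rw [Submodule.add_eq_sup, sup_le_iff]
      exact ⟨hIQ, Ideal.map_le_iff_le_comap.mpr hQP.ge⟩
    · intro s hs
      rw [Ideal.mem_comap]
      exact Submodule.mem_sup_right (Ideal.mem_map_of_mem f hs)
end

section
/- Let S be a commutative local ring and R an S-algebra which is finitely generated as an S-module. Then R satisfies going up (GU) over S: for prime ideals P₀ ⊆ P₁ of S and a prime ideal Q₀ of R lying over P₀, there exists a prime ideal Q₁ ⊇ Q₀ of R lying over P₁. -/
section Aux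

variable {R : Type*} [Ring R]

/-- The left ideal generated by `{X * b | b}` is closed under right multiplication. -/
private lemma mul_mem_span_right {X a : R}
    (ha : a ∈ Ideal.span (Set.range fun b => X * b)) (r : R) :
    a * r ∈ Ideal.span (Set.range fun b => X * b) := by
  induction ha using Submodule.span_induction with
  | mem y hy =>
    obtain ⟨b, rfl⟩ := hy
    exact Ideal.subset_span ⟨b * r, (mul_assoc _ _ _).symm⟩
  | zero => simpa using Ideal.zero_mem _
  | add u v _ _ hu hv => simpa [add_mul] using Ideal.add_mem _ hu hv
  | smul c u _ hu => simpa [smul_eq_mul, mul_assoc] using Ideal.mul_mem_left _ c hu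

private lemma x_mem_span : ∀ X : R, X ∈ Ideal.span (Set.range fun b => X * b) := fun X =>
  Ideal.subset_span ⟨1, mul_one X⟩

/-- Key multiplication fact for the primality argument. -/
private lemma span_mul_span_mem {Q : Ideal R} (hts : IsTwoSidedI Q) {x y : R}
    (hxy : ∀ r, x * r * y ∈ Q) {u v : R}
    (hu : u ∈ Ideal.span (Set.range fun b => x * b))
    (hv : v ∈ Ideal.span (Set.range fun b => y * b)) : u * v ∈ Q := by
  have inner : ∀ v ∈ Ideal.span (Set.range fun b => y * b), ∀ b : R, x * b * v ∈ Q := by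
    intro v hv
    induction hv using Submodule.span_induction with
    | mem w hw =>
      intro b
      obtain ⟨r, rfl⟩ := hw
      have := hts _ (hxy b) r
      simpa [mul_assoc] using this
    | zero => intro b; simpa using Q.zero_mem
    | add v₁ v₂ _ _ h1 h2 => intro b; simpa [mul_add] using Q.add_mem (h1 b) (h2 b)
    | smul c w _ h =>
      intro b
      have := h (b * c)
      simpa [smul_eq_mul, mul_assoc] using this
  induction hu using Submodule.span_induction with
  | mem w hw =>
    obtain ⟨b, rfl⟩ := hw
    exact inner v hv b
  | zero => simpa using Q.zero_mem
  | add u₁ u₂ _ _ h1 h2 => simpa [add_mul] using Q.add_mem h1 h2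
  | smul c w _ h => simpa [smul_eq_mul, mul_assoc] using Q.mul_mem_left c h

end Aux

section Key

variable {S R : Type*} [CommRing S] [Ring R] [Algebra S R]

/-- Elements of `P₁ • ⊤ ⊆ R` absorb multiplication on both sides. -/
private lemma smul_top_mul_closed {P₁ : Ideal S} {v : R}
    (hv : v ∈ P₁ • (⊤ : Submodule S R)) (c : R) :
    c * v ∈ P₁ • (⊤ : Submodule S R) ∧ v * c ∈ P₁ • (⊤ : Submodule S R) := by
  refine Submodule.smul_induction_on hv ?_ ?_
  · intro p hp t ht
    constructor
    · rw [mul_smul_comm]; exact Submodule.smul_mem_smul hp trivial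
    · rw [smul_mul_assoc]; exact Submodule.smul_mem_smul hp trivial
  · intro u w hu hw
    exact ⟨by simpa [mul_add] using add_mem hu.1 hw.1,
      by simpa [add_mul] using add_mem hu.2 hw.2⟩

private lemma map_le_smul_top (P₁ : Ideal S) {u : R}
    (hu : u ∈ Ideal.map (algebraMap S R) P₁) : u ∈ P₁ • (⊤ : Submodule S R) := by
  induction hu using Submodule.span_induction with
  | mem w hw =>
    obtain ⟨p, hp, rfl⟩ := hw
    rw [Algebra.algebraMap_eq_smul_one]
    exact Submodule.smul_mem_smul hp trivial
  | zero => exact zero_mem _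
  | add u₁ u₂ _ _ h1 h2 => exact add_mem h1 h2
  | smul c w _ h => simpa [smul_eq_mul] using (smul_top_mul_closed h c).1

/-- **Key lemma** (a Cayley–Hamilton / determinant-trick argument): if
`algebraMap S R s ∈ Q₀ ⊔ P₁R` then `s ∈ P₁`. -/
private lemma key_mem [Module.Finite S R]
    (P₀ P₁ : Ideal S) (hP₁ : P₁.IsPrime) (hle : P₀ ≤ P₁)
    (Q₀ : Ideal R) (hQ₀ts : IsTwoSidedI Q₀)
    (hover₀ : Q₀.comap (algebraMap S R) = P₀)
    {s : S} (hs : algebraMap S R s ∈ Q₀ ⊔ Ideal.map (algebraMap S R) P₁) :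
    s ∈ P₁ := by
  classical
  set N : Submodule S R := Q₀.restrictScalars S with hN
  set x : R := algebraMap S R s with hxdef
  -- decompose x
  obtain ⟨q, hq, z, hz, hxqz⟩ := Submodule.mem_sup.mp hs
  have hzsm : z ∈ P₁ • (⊤ : Submodule S R) := map_le_smul_top P₁ hz
  -- the endomorphism "left multiplication by x" of M := R ⧸ N
  have hker : N ≤ LinearMap.ker ((N.mkQ).comp (LinearMap.mulLeft S x)) := by
    intro a ha
    simp only [LinearMap.mem_ker, LinearMap.comp_apply, LinearMap.mulLeft_apply]
    rw [Submodule.mkQ_apply, Submodule.Quotient.mk_eq_zero]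
    exact Ideal.mul_mem_left Q₀ x ha
  set φ : Module.End S (R ⧸ N) := N.liftQ ((N.mkQ).comp (LinearMap.mulLeft S x)) hker with hφdef
  have hφ_apply : ∀ r : R, φ (N.mkQ r) = N.mkQ (x * r) := fun r => rfl
  have hMfin : Module.Finite S (R ⧸ N) :=
    Module.Finite.of_surjective N.mkQ (Submodule.mkQ_surjective N)
  -- range condition
  have hrange : LinearMap.range φ ≤ P₁ • (⊤ : Submodule S (R ⧸ N)) := by
    rintro _ ⟨m, rfl⟩
    obtain ⟨r, rfl⟩ := Submodule.mkQ_surjective N m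
    rw [hφ_apply]
    have hxr : x * r = q * r + z * r := by rw [← hxqz, add_mul]
    have h1 : N.mkQ (q * r) = 0 := by
      rw [Submodule.mkQ_apply, Submodule.Quotient.mk_eq_zero]
      exact hQ₀ts q hq r
    have h2 : z * r ∈ P₁ • (⊤ : Submodule S R) := (smul_top_mul_closed hzsm r).2
    have h3 : N.mkQ (z * r) ∈ P₁ • (⊤ : Submodule S (R ⧸ N)) := by
      have := Submodule.mem_map_of_mem (f := N.mkQ) h2
      rw [Submodule.map_smul''] at this
      exact Submodule.smul_mono le_rfl le_top this
    rw [hxr, map_add, h1, zero_add]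
    exact h3
  obtain ⟨p, hmonic, -, hcoeff, heval⟩ :=
    LinearMap.exists_monic_and_coeff_mem_pow_and_aeval_eq_zero_of_range_le_smul S φ P₁ hrange
  -- powers of φ applied to 1
  have hpow : ∀ k : ℕ, (φ ^ k) (N.mkQ 1) = N.mkQ (x ^ k) := by
    intro k
    induction k with
    | zero => simp
    | succ k ih =>
      rw [pow_succ', Module.End.mul_apply, ih, hφ_apply, ← pow_succ']
  -- evaluate the Cayley-Hamilton identity at mkQ 1
  have h0 : N.mkQ (Polynomial.aeval x p) = 0 := by
    have h := congrFun (congrArg DFunLike.coe heval) (N.mkQ 1)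
    rw [Polynomial.aeval_eq_sum_range (R := S) φ, LinearMap.zero_apply] at h
    rw [Polynomial.aeval_eq_sum_range (R := S) x, map_sum]
    rw [LinearMap.coe_sum, Finset.sum_apply] at h
    simp only [LinearMap.smul_apply, hpow] at h
    simpa [map_smul] using h
  have hQmem : Polynomial.aeval x p ∈ Q₀ := by
    rwa [Submodule.mkQ_apply, Submodule.Quotient.mk_eq_zero] at h0
  have haev : Polynomial.aeval x p = algebraMap S R (Polynomial.aeval s p) := by
    rw [hxdef, Polynomial.aeval_algebraMap_apply]
  have hevalP : Polynomial.aeval s p ∈ P₁ := by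
    apply hle
    rw [← hover₀]
    rw [haev] at hQmem
    exact hQmem
  -- conclude s ^ n ∈ P₁
  set n := p.natDegree with hn
  have hsum : Polynomial.aeval s p =
      (∑ i ∈ Finset.range n, p.coeff i • s ^ i) + p.coeff n • s ^ n := by
    rw [Polynomial.aeval_eq_sum_range (R := S) s, Finset.sum_range_succ]
  have hsn : s ^ n ∈ P₁ := by
    have hc : ∀ i ∈ Finset.range n, p.coeff i • s ^ i ∈ P₁ := by
      intro i hi
      rw [Finset.mem_range] at hi
      have : p.coeff i ∈ P₁ ^ (n - i) := hcoeff i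
      have h1 : p.coeff i ∈ P₁ := Ideal.pow_le_self (Nat.sub_ne_zero_of_lt hi) this
      exact P₁.mul_mem_right _ h1
    have hsumP : (∑ i ∈ Finset.range n, p.coeff i • s ^ i) ∈ P₁ := Ideal.sum_mem _ hc
    have : p.coeff n • s ^ n ∈ P₁ := by
      have := hsum ▸ hevalP
      have h2 := Ideal.sub_mem P₁ this hsumP
      simpa using h2
    rwa [hmonic.coeff_natDegree, one_smul] at this
  exact hP₁.mem_of_pow_mem n hsn

end Key

/-- **GU.** Let `S` be a commutative local ring and `R` an `S`-algebra
finitely generated as an `S`-module.  For primes `P₀ ⊆ P₁` of `S` and a prime `Q₀`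
of `R` lying over `P₀`, there is a prime `Q₁ ⊇ Q₀` of `R` lying over `P₁`. -/
theorem stmt15 {S R : Type*} [CommRing S] [IsLocalRing S] [Ring R]
    [Algebra S R] [Module.Finite S R]
    (P₀ P₁ : Ideal S) (hP₀ : P₀.IsPrime) (hP₁ : P₁.IsPrime) (hle : P₀ ≤ P₁)
    (Q₀ : Ideal R) (hQ₀ts : IsTwoSidedI Q₀) (hQ₀ : IsPrimeNC Q₀)
    (hover₀ : Q₀.comap (algebraMap S R) = P₀) :
    ∃ Q₁ : Ideal R, IsTwoSidedI Q₁ ∧ IsPrimeNC Q₁ ∧ Q₀ ≤ Q₁ ∧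
      Q₁.comap (algebraMap S R) = P₁ := by
  classical
  set I₁ : Ideal R := Ideal.map (algebraMap S R) P₁ with hI₁
  -- right-multiplication closure of I₁
  have hI₁right : ∀ u ∈ I₁, ∀ r : R, u * r ∈ I₁ := by
    intro u hu r
    induction hu using Submodule.span_induction with
    | mem w hw =>
      obtain ⟨p, hp, rfl⟩ := hw
      rw [Algebra.commutes]
      exact Ideal.mul_mem_left _ r (Ideal.mem_map_of_mem _ hp)
    | zero => simpa using I₁.zero_mem
    | add u₁ u₂ _ _ h1 h2 => simpa [add_mul] using I₁.add_mem h1 h2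
    | smul c w _ h => simpa [smul_eq_mul, mul_assoc] using I₁.mul_mem_left c h
  set 𝒜 : Set (Ideal R) :=
    {J | IsTwoSidedI J ∧ Q₀ ≤ J ∧ I₁ ≤ J ∧ ∀ s : S, algebraMap S R s ∈ J → s ∈ P₁} with h𝒜
  -- the base ideal is in the family
  have hbase : Q₀ ⊔ I₁ ∈ 𝒜 := by
    refine ⟨?_, le_sup_left, le_sup_right, ?_⟩
    · intro a ha r
      obtain ⟨q, hq, u, hu, rfl⟩ := Submodule.mem_sup.mp ha
      rw [add_mul]
      exact Submodule.add_mem_sup (hQ₀ts q hq r) (hI₁right u hu r)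
    · intro s hs
      exact key_mem P₀ P₁ hP₁ hle Q₀ hQ₀ts hover₀ hs
  -- Zorn's lemma
  obtain ⟨Q₁, hQ₁ge, hQ₁mem, hQ₁max⟩ := by
    refine zorn_le_nonempty₀ 𝒜 ?_ (Q₀ ⊔ I₁) hbase
    intro c hc𝒜 hchain y hy
    refine ⟨sSup c, ⟨?_, ?_, ?_, ?_⟩, fun z hz => le_sSup hz⟩
    all_goals
      have hne : c.Nonempty := ⟨y, hy⟩
      have hdir : DirectedOn (· ≤ ·) c := hchain.directedOn
      have hmem : ∀ a : R, a ∈ sSup c → ∃ J ∈ c, a ∈ J := by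
        intro a ha
        haveI : Nonempty c := hne.to_subtype
        rw [sSup_eq_iSup'] at ha
        obtain ⟨⟨J, hJ⟩, haJ⟩ := (Submodule.mem_iSup_of_directed _
          (hdir.directed_val)).mp ha
        exact ⟨J, hJ, haJ⟩
    · intro a ha r
      obtain ⟨J, hJ, haJ⟩ := hmem a ha
      exact (le_sSup hJ) ((hc𝒜 hJ).1 a haJ r)
    · exact le_trans (hc𝒜 hy).2.1 (le_sSup hy)
    · exact le_trans (hc𝒜 hy).2.2.1 (le_sSup hy)
    · intro s hs
      obtain ⟨J, hJ, hsJ⟩ := hmem _ hs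
      exact (hc𝒜 hJ).2.2.2 s hsJ
  obtain ⟨hts, hQ₀le, hI₁le, hkey⟩ := hQ₁mem
  have hQ₀leQ₁ : Q₀ ≤ Q₁ := hQ₀le
  -- Q₁ ≠ ⊤
  have hne : Q₁ ≠ ⊤ := by
    intro h
    have : algebraMap S R 1 ∈ Q₁ := by rw [h]; trivial
    exact hP₁.ne_top (Ideal.eq_top_of_isUnit_mem _ (hkey 1 this) isUnit_one)
  -- primeness
  have hprime : IsPrimeNC Q₁ := by
    refine ⟨hne, ?_⟩
    intro x y hxy
    by_contra hcon
    push_neg at hcon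
    obtain ⟨hx, hy⟩ := hcon
    -- enlarge by x and by y
    have henl : ∀ w : R, w ∉ Q₁ → ∃ s : S, s ∉ P₁ ∧
        algebraMap S R s ∈ Q₁ ⊔ Ideal.span (Set.range fun b => w * b) := by
      intro w hw
      set Qw := Q₁ ⊔ Ideal.span (Set.range fun b => w * b) with hQw
      by_contra hcon2
      push_neg at hcon2
      have hQwmem : Qw ∈ 𝒜 := by
        refine ⟨?_, le_trans hQ₀le le_sup_left, le_trans hI₁le le_sup_left, ?_⟩
        · intro a ha r
          obtain ⟨q, hq, u, hu, rfl⟩ := Submodule.mem_sup.mp ha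
          rw [add_mul]
          exact Submodule.add_mem_sup (hts q hq r) (mul_mem_span_right hu r)
        · intro s hs
          by_contra hsP
          exact hsP (by
            by_contra h'
            exact h' (by
              rcases (em (s ∈ P₁)) with h | h
              · exact h
              · exact absurd hs (by simpa using hcon2 s h)))
      have heq : Qw = Q₁ := le_antisymm (hQ₁max hQwmem le_sup_left) le_sup_left
      exact hw (heq ▸ (le_sup_right (a := Q₁) (x_mem_span w)))
    obtain ⟨s, hsP, hsmem⟩ := henl x hx
    obtain ⟨t, htP, htmem⟩ := henl y hy
    -- algebraMap (s * t) ∈ Q₁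
    obtain ⟨q, hq, u, hu, hsu⟩ := Submodule.mem_sup.mp hsmem
    obtain ⟨q', hq', v, hv, htv⟩ := Submodule.mem_sup.mp htmem
    have hst : algebraMap S R (s * t) ∈ Q₁ := by
      rw [map_mul, ← hsu, ← htv]
      have h1 : q * (q' + v) ∈ Q₁ := hts q hq _
      have h2 : u * q' ∈ Q₁ := Ideal.mul_mem_left _ u hq'
      have h3 : u * v ∈ Q₁ := span_mul_span_mem hts hxy hu hv
      have heq : (q + u) * (q' + v) = q * (q' + v) + (u * q' + u * v) := by
        rw [add_mul, mul_add u]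
      rw [heq]
      exact Q₁.add_mem h1 (Q₁.add_mem h2 h3)
    have := hkey _ hst
    rcases hP₁.mem_or_mem this with h | h
    · exact hsP h
    · exact htP h
  -- lying over
  have hcomap : Q₁.comap (algebraMap S R) = P₁ := by
    apply le_antisymm
    · intro s hs
      exact hkey s hs
    · intro p hp
      exact hI₁le (Ideal.mem_map_of_mem _ hp)
  exact ⟨Q₁, hts, hprime, hQ₀leQ₁, hcomap⟩
end
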